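/- The supremum over p ∈ (0, ∞) of the function p ↦ p²(p + √(p²+1)) / ((√(p²+1) + 1)(p² + 2 − √(p²+1))) equals 2. -/
import Mathlib


theorem stmt_6 :
    IsLUB ((fun p : ℝ =>
        p ^ 2 * (p + Real.sqrt (p ^ 2 + 1)) /
          ((Real.sqrt (p ^ 2 + 1) + 1) * (p ^ 2 + 2 - Real.sqrt (p ^ 2 + 1)))) ''
      Set.Ioi 0) 2 := by
  constructor
  · rintro x ⟨p, hp, rfl⟩
    simp only [Set.mem_Ioi] at hp
    set s := Real.sqrt (p ^ 2 + 1) with hs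
    have hs0 : 0 ≤ s := Real.sqrt_nonneg _
    have hs2 : s ^ 2 = p ^ 2 + 1 := Real.sq_sqrt (by positivity)
    have hs1 : 1 ≤ s := by nlinarith
    have hps : p < s := by nlinarith
    have hden : 0 < (s + 1) * (p ^ 2 + 2 - s) := by nlinarith
    rw [div_le_iff₀ hden]
    nlinarith
  · intro b hb
    by_contra h
    push_neg at h
    set c : ℝ := 2 - b with hc
    have hc0 : 0 < c := by linarith
    set s : ℝ := max 2 (5 / c) with hsdef
    have hs2' : 2 ≤ s := le_max_left _ _
    have hcs : 5 ≤ c * s := by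
      have : 5 / c ≤ s := le_max_right _ _
      calc 5 = c * (5 / c) := by field_simp
        _ ≤ c * s := by nlinarith
    set p : ℝ := Real.sqrt (s ^ 2 - 1) with hpdef
    have hp2 : p ^ 2 = s ^ 2 - 1 := Real.sq_sqrt (by nlinarith)
    have hp0 : 0 < p := Real.sqrt_pos.mpr (by nlinarith)
    have hsq : Real.sqrt (p ^ 2 + 1) = s := by
      rw [hp2]
      have : s ^ 2 - 1 + 1 = s ^ 2 := by ring
      rw [this, Real.sqrt_sq (by linarith)]
    have hple : s - 1 ≤ p := by
      rw [hpdef]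
      apply Real.le_sqrt' (by linarith) |>.mpr
      nlinarith
    have hmem : p ^ 2 * (p + Real.sqrt (p ^ 2 + 1)) /
          ((Real.sqrt (p ^ 2 + 1) + 1) * (p ^ 2 + 2 - Real.sqrt (p ^ 2 + 1))) ≤ b :=
      hb ⟨p, hp0, rfl⟩
    rw [hsq] at hmem
    have hden : 0 < (s + 1) * (p ^ 2 + 2 - s) := by nlinarith
    have : b < p ^ 2 * (p + s) / ((s + 1) * (p ^ 2 + 2 - s)) := by
      rw [lt_div_iff₀ hden]
      nlinarith [sq_nonneg s, sq_nonneg (s - 1)]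
    linarith
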